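/- arXiv:math/0702097 — 5 statements merged into one kernel-verified Lean document; each statement's English description precedes it below -/
import Mathlib

section
/- The unique formal power series q(x) over the rationals satisfying q(x) = 1 + x·q(x)^3 has coefficients given by the Fuss–Catalan numbers: the coefficient of x^n in q(x) equals (3n)!/(n!·(2n+1)!). -/
open PowerSeries

/-- The unique formal power series `q` over `ℚ` satisfying `q = 1 + X * q^3`
has coefficients given by the Fuss–Catalan numbers:
the coefficient of `X^n` is `(3n)! / (n! * (2n+1)!)`. -/
theorem stmt_0 (q : PowerSeries ℚ) (hq : q = 1 + PowerSeries.X * q ^ 3) :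
    ∀ n : ℕ, PowerSeries.coeff n q =
      (Nat.factorial (3 * n) : ℚ) /
        ((Nat.factorial n : ℚ) * (Nat.factorial (2 * n + 1) : ℚ)) := by
  set p : ℚ⟦X⟧ := PowerSeries.derivative ℚ q with hpdef
  set r : ℚ⟦X⟧ := PowerSeries.derivative ℚ p with hrdef
  have h3 : (PowerSeries.derivative ℚ) (3 : ℚ⟦X⟧) = 0 := by
    rw [← map_ofNat (C (R := ℚ)) 3, derivative_C]
  have E1 : p = q^3 + 3 * X * q^2 * p := by
    rw [hpdef]
    conv_lhs => rw [hq]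
    simp only [map_add, Derivation.map_one_eq_zero, Derivation.leibniz, Derivation.leibniz_pow,
      derivative_X, smul_eq_mul, zero_add, nsmul_eq_mul]
    ring
  have E2 : r = 6*q^2*p + 6*X*q*p^2 + 3*X*q^2*r := by
    rw [hrdef]
    conv_lhs => rw [E1]
    simp only [map_add, Derivation.map_one_eq_zero, Derivation.leibniz, Derivation.leibniz_pow,
      derivative_X, smul_eq_mul, zero_add, nsmul_eq_mul, h3]
    ring
  have h1 : X * q^3 = q - 1 := by linear_combination -hq
  have hp : (1 - 3*X*q^2) * p = q^3 := by linear_combination E1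
  have hr : (1 - 3*X*q^2) * r = 6*q^2*p + 6*X*q*p^2 := by linear_combination E2
  have hkey : ((4*X - 27*X^2)*r + (6 - 54*X)*p - 6*q) * (1 - 3*X*q^2)^3 = 0 := by
    linear_combination (-6*q - 6*q^2 + 6*X*q^4) * h1 +
      ((4*X - 27*X^2)*(6*q^2*(1 - 3*X*q^2) + 6*X*q*((1 - 3*X*q^2)*p + q^3)) +
        (6 - 54*X)*(1 - 3*X*q^2)^2) * hp +
      ((4*X - 27*X^2)*(1 - 3*X*q^2)^2) * hr
  have hu : (1 - 3*X*q^2 : ℚ⟦X⟧) ≠ 0 := by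
    intro h
    have := congrArg (PowerSeries.constantCoeff) h
    simp [map_sub, map_mul, map_pow, constantCoeff_X] at this
  have hT : (4*X - 27*X^2)*r + (6 - 54*X)*p - 6*q = 0 :=
    (mul_eq_zero.mp hkey).resolve_right (pow_ne_zero 3 hu)
  have hODE : (4:ℚ) • (X*r) + (6:ℚ) • p = (27:ℚ) • (X*(X*r)) + (54:ℚ) • (X*p) + (6:ℚ) • q := by
    simp only [smul_eq_C_mul, map_ofNat]
    linear_combination hT
  have h0 : coeff 0 q = 1 := by
    rw [hq]
    rw [show (X*q^3 : ℚ⟦X⟧) = X*(q^3) from rfl]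
    simp [coeff_zero_X_mul]
  have hrec : ∀ n : ℕ, ((n:ℚ)+1)*(4*(n:ℚ)+6) * coeff (n+1) q
      = (27*(n:ℚ)^2+27*(n:ℚ)+6) * coeff n q := by
    intro n
    have hc := congrArg (coeff n) hODE
    simp only [map_add, map_smul, smul_eq_mul] at hc
    match n with
    | 0 =>
      simp only [coeff_zero_X_mul, hpdef, hrdef, coeff_derivative] at hc
      push_cast at hc ⊢
      linear_combination hc
    | 1 =>
      simp only [coeff_succ_X_mul, coeff_zero_X_mul, hpdef, hrdef, coeff_derivative] at hc
      push_cast at hc ⊢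
      linear_combination hc
    | (m+2) =>
      simp only [coeff_succ_X_mul, coeff_zero_X_mul, hpdef, hrdef, coeff_derivative] at hc
      push_cast at hc ⊢
      linear_combination hc
  intro n
  induction n with
  | zero => simpa [Nat.factorial] using h0
  | succ m ih =>
    have hm := hrec m
    rw [ih] at hm
    have f1 : ((3*(m+1)).factorial : ℚ)
        = (3*(m:ℚ)+3)*(3*(m:ℚ)+2)*(3*(m:ℚ)+1)*((3*m).factorial : ℚ) := by
      rw [show 3*(m+1) = (3*m+2)+1 by ring, Nat.factorial_succ,
        show 3*m+2 = (3*m+1)+1 by ring, Nat.factorial_succ,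
        show 3*m+1 = (3*m)+1 by ring, Nat.factorial_succ]
      push_cast; ring
    have f2 : (((m+1)).factorial : ℚ) = ((m:ℚ)+1)*(m.factorial : ℚ) := by
      rw [Nat.factorial_succ]; push_cast; ring
    have f3 : ((2*(m+1)+1).factorial : ℚ)
        = (2*(m:ℚ)+3)*(2*(m:ℚ)+2)*((2*m+1).factorial : ℚ) := by
      rw [show 2*(m+1)+1 = (2*m+2)+1 by ring, Nat.factorial_succ,
        show 2*m+2 = (2*m+1)+1 by ring, Nat.factorial_succ]
      push_cast; ring
    rw [f1, f2, f3]
    have hb : ((m.factorial : ℚ)) ≠ 0 := Nat.cast_ne_zero.mpr m.factorial_ne_zero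
    have hd : (((2*m+1).factorial : ℚ)) ≠ 0 := Nat.cast_ne_zero.mpr (2*m+1).factorial_ne_zero
    have hm1 : ((m:ℚ)+1) ≠ 0 := by positivity
    have hm2 : (2*(m:ℚ)+3) ≠ 0 := by positivity
    have hm3 : (2*(m:ℚ)+2) ≠ 0 := by positivity
    field_simp at hm ⊢
    linear_combination hm
end

section
/- There exists exactly one formal power series q in ℚ[[x]] with constant term 1 satisfying q = 1 + x·q^3. -/
open PowerSeries

private lemma coeff_mul_congr {p p' q q' : PowerSeries ℚ} {m : ℕ}
    (hp : ∀ j ≤ m, coeff j p = coeff j p')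
    (hq : ∀ j ≤ m, coeff j q = coeff j q') :
    coeff m (p * q) = coeff m (p' * q') := by
  rw [coeff_mul, coeff_mul]
  apply Finset.sum_congr rfl
  intro x hx
  rw [Finset.HasAntidiagonal.mem_antidiagonal] at hx
  rw [hp x.1 (by omega), hq x.2 (by omega)]

private lemma coeff_pow_congr {p p' : PowerSeries ℚ} (k : ℕ) {m : ℕ}
    (h : ∀ j ≤ m, coeff j p = coeff j p') :
    ∀ j ≤ m, coeff j (p ^ k) = coeff j (p' ^ k) := by
  induction k with
  | zero => intro j _; simp
  | succ k ih =>
    intro j hj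
    rw [pow_succ, pow_succ]
    exact coeff_mul_congr (fun i hi => ih i (le_trans hi hj))
      (fun i hi => h i (le_trans hi hj))

private noncomputable def Fq : ℕ → PowerSeries ℚ
  | 0 => 1
  | n + 1 => 1 + PowerSeries.X * (Fq n) ^ 3

private lemma coeff_succ (p : PowerSeries ℚ) (k : ℕ) :
    coeff (k + 1) (1 + PowerSeries.X * p) = coeff k p := by
  simp [coeff_succ_X_mul, coeff_one]

private lemma coeff_zero' (p : PowerSeries ℚ) :
    coeff 0 (1 + PowerSeries.X * p) = 1 := by
  simp

private lemma Fstab : ∀ k n m, k < n → k < m →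
    coeff k (Fq n) = coeff k (Fq m) := by
  intro k
  induction k using Nat.strong_induction_on with
  | _ k ih =>
    intro n m hn hm
    obtain ⟨n', rfl⟩ := Nat.exists_eq_succ_of_ne_zero (by omega : n ≠ 0)
    obtain ⟨m', rfl⟩ := Nat.exists_eq_succ_of_ne_zero (by omega : m ≠ 0)
    cases k with
    | zero => simp [Fq]
    | succ k' =>
      show coeff (k' + 1) (Fq (n' + 1)) = coeff (k' + 1) (Fq (m' + 1))
      rw [show Fq (n' + 1) = 1 + PowerSeries.X * (Fq n') ^ 3 from rfl,
        show Fq (m' + 1) = 1 + PowerSeries.X * (Fq m') ^ 3 from rfl,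
        coeff_succ, coeff_succ]
      exact coeff_pow_congr 3
        (fun j hj => ih j (by omega) n' m' (by omega) (by omega)) k' le_rfl

private noncomputable def qq : PowerSeries ℚ :=
  PowerSeries.mk (fun k => coeff k (Fq (k + 1)))

private lemma qq_eq : ∀ k n, k < n → coeff k qq = coeff k (Fq n) := by
  intro k n hk
  rw [qq, coeff_mk]
  exact Fstab k (k + 1) n (by omega) hk

private lemma qq_fix : qq = 1 + PowerSeries.X * qq ^ 3 := by
  ext k
  cases k with
  | zero =>
    rw [coeff_zero' (qq ^ 3), qq_eq 0 1 (by omega)]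
    simp [Fq]
  | succ k =>
    rw [coeff_succ (qq ^ 3) k, qq_eq (k + 1) (k + 2) (by omega),
      show Fq (k + 2) = 1 + PowerSeries.X * (Fq (k + 1)) ^ 3 from rfl, coeff_succ]
    exact (coeff_pow_congr 3 (fun j hj => qq_eq j (k + 1) (by omega)) k le_rfl).symm

/-- There is exactly one formal power series `q ∈ ℚ[[x]]` with constant term `1`
satisfying `q = 1 + x·q^3`. -/
theorem stmt_1 :
    ∃! q : PowerSeries ℚ,
      PowerSeries.constantCoeff q = 1 ∧ q = 1 + PowerSeries.X * q ^ 3 := by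
  refine ⟨qq, ⟨?_, qq_fix⟩, ?_⟩
  · have := qq_eq 0 1 (by omega)
    simp only [coeff_zero_eq_constantCoeff] at this
    rw [this]; simp [Fq]
  · rintro r ⟨hrc, hre⟩
    ext n
    induction n using Nat.strong_induction_on with
    | _ n ih =>
      cases n with
      | zero =>
        simp only [coeff_zero_eq_constantCoeff, hrc]
        have := qq_eq 0 1 (by omega)
        simp only [coeff_zero_eq_constantCoeff] at this
        rw [this]; simp [Fq]
      | succ n =>
        rw [hre, coeff_succ (r ^ 3) n]
        conv_rhs => rw [qq_fix]
        rw [coeff_succ (qq ^ 3) n]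
        exact coeff_pow_congr 3 (fun j hj => ih j (by omega)) n le_rfl
end

section
/- For every n ≥ 1, the number (3n)!/(n!·n!·(n+1)!) is a (positive) integer. -/
open Nat in
/-- For every `n ≥ 1`, the number `(3n)!/(n!·n!·(n+1)!)` is a positive integer:
`n!·n!·(n+1)!` divides `(3n)!`, and the (exact) natural quotient is positive. -/
theorem stmt_3 (n : ℕ) (hn : 1 ≤ n) :
    (n ! * n ! * (n + 1)!) ∣ (3 * n)! ∧ 0 < (3 * n)! / (n ! * n ! * (n + 1)!) := by
  have h1 : (3 * n).choose n * n ! * (2 * n)! = (3 * n)! := by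
    have := Nat.choose_mul_factorial_mul_factorial (show n ≤ 3 * n by omega)
    have h2 : 3 * n - n = 2 * n := by omega
    rwa [h2] at this
  have h3 : (2 * n).choose n * n ! * n ! = (2 * n)! := by
    have := Nat.choose_mul_factorial_mul_factorial (show n ≤ 2 * n by omega)
    have h2 : 2 * n - n = n := by omega
    rwa [h2] at this
  have hc : (n + 1) * catalan n = (2 * n).choose n := by
    rw [succ_mul_catalan_eq_centralBinom, Nat.centralBinom]
  have hdvd : (n ! * n ! * (n + 1)!) ∣ (3 * n)! := by
    refine ⟨(3 * n).choose n * catalan n, ?_⟩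
    rw [← h1, ← h3, ← hc, Nat.factorial_succ]
    ring
  refine ⟨hdvd, Nat.div_pos (Nat.le_of_dvd (Nat.factorial_pos _) hdvd) ?_⟩
  positivity
end

section
/- The function u ↦ F(u) + u·F'(u), where F(u) = ∑_{n≥1} (3n)!/(n!·n!·(n+1)!)·u^n, is strictly increasing on [0, 1/27), equals 0 at u = 0, and tends to +∞ as u → 1/27⁻; consequently for every y > 0 there is a unique u* ∈ (0, 1/27) with y = F(u*) + u*·F'(u*). -/
open Nat
/-- The coefficients `(3n)!/(n!·n!·(n+1)!)` (for `n ≥ 1`, and `0` for `n = 0`). -/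
noncomputable def fcCoeff (n : ℕ) : ℝ :=
  if n = 0 then 0 else ((3 * n)! : ℝ) / ((n ! : ℝ) * (n !) * ((n + 1)!))

/-- The series `F(u) = ∑_{n≥1} (3n)!/(n!·n!·(n+1)!) u^n`. -/
noncomputable def Fser (u : ℝ) : ℝ := ∑' n : ℕ, fcCoeff n * u ^ n

lemma fc_nonneg (n : ℕ) : 0 ≤ fcCoeff n := by
  unfold fcCoeff; split <;> positivity

lemma fc_zero : fcCoeff 0 = 0 := by simp [fcCoeff]

lemma fc_one : fcCoeff 1 = 3 := by norm_num [fcCoeff, factorial]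

lemma fc_pos (n : ℕ) (hn : n ≠ 0) : 0 < fcCoeff n := by
  unfold fcCoeff; rw [if_neg hn]; positivity

lemma fc_rec (n : ℕ) (hn : n ≠ 0) :
    fcCoeff (n+1) * ((n+1)*(n+1)*(n+2)) = fcCoeff n * ((3*n+1)*(3*n+2)*(3*n+3)) := by
  unfold fcCoeff
  rw [if_neg hn, if_neg (Nat.succ_ne_zero n)]
  have h3 : 3 * (n+1) = (3*n+2) + 1 := by ring
  have h2 : 3 * n + 2 = (3*n+1) + 1 := by ring
  have h1 : 3 * n + 1 = (3*n) + 1 := by ring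
  rw [h3, factorial_succ, h2, factorial_succ, h1, factorial_succ]
  have e1 : (n+1)! = (n+1) * n ! := factorial_succ n
  have e2 : (n+1+1)! = (n+2) * ((n+1) * n !) := by rw [factorial_succ, e1]
  rw [e1, e2]
  have hfn : (0:ℝ) < (n ! : ℝ) := by positivity
  have hfn1 : (0:ℝ) < ((n+1 : ℕ) : ℝ) := by positivity
  push_cast
  field_simp
  ring

lemma fc_le (n : ℕ) : fcCoeff n ≤ 27 ^ n := by
  induction n with
  | zero => simp [fc_zero]
  | succ n ih =>
    rcases Nat.eq_zero_or_pos n with h | h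
    · subst h; rw [fc_one]; norm_num
    · have hrec := fc_rec n h.ne'
      have hd : (0:ℝ) < ((n:ℝ)+1)*((n:ℝ)+1)*((n:ℝ)+2) := by positivity
      have key : fcCoeff (n+1) ≤ 27 * fcCoeff n := by
        rw [← mul_le_mul_iff_of_pos_right hd]
        push_cast at hrec
        rw [hrec]
        have := fc_nonneg n
        nlinarith [fc_nonneg n, sq_nonneg ((n:ℝ))]
      calc fcCoeff (n+1) ≤ 27 * fcCoeff n := key
        _ ≤ 27 * 27 ^ n := by nlinarith
        _ = 27 ^ (n+1) := by ring

lemma fc_lower (n : ℕ) (hn : n ≠ 0) :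
    (17/9) * 27 ^ n ≤ fcCoeff n * (8*n^2 + 8*n + 1) := by
  induction n with
  | zero => exact absurd rfl hn
  | succ n ih =>
    rcases Nat.eq_zero_or_pos n with h | h
    · subst h; rw [fc_one]; norm_num
    · have ih := ih h.ne'
      have hrec := fc_rec n h.ne'
      push_cast at hrec ih ⊢
      set x : ℝ := (n:ℝ) with hx
      have hx0 : 0 ≤ x := Nat.cast_nonneg n
      have hd : (0:ℝ) < (x+1)*(x+1)*(x+2) := by positivity
      rw [← mul_le_mul_iff_of_pos_right hd]
      have expand : fcCoeff (n+1) * (8*(x+1)^2 + 8*(x+1) + 1) * ((x+1)*(x+1)*(x+2))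
          = fcCoeff n * ((3*x+1)*(3*x+2)*(3*x+3)) * (8*x^2+24*x+17) := by
        have : fcCoeff (n+1) * (8*(x+1)^2 + 8*(x+1) + 1) * ((x+1)*(x+1)*(x+2))
            = (fcCoeff (n+1) * ((x+1)*(x+1)*(x+2))) * (8*(x+1)^2 + 8*(x+1) + 1) := by ring
        rw [this, hrec]; ring
      rw [expand]
      have h27 : (0:ℝ) < 27 ^ n := by positivity
      have hfc := fc_nonneg n
      have id1 : fcCoeff n * ((3*x+1)*(3*x+2)*(3*x+3)) * (8*x^2+24*x+17)
          = fcCoeff n*(8*x^2+8*x+1)*(27*(x+1)*(x+1)*(x+2)) + fcCoeff n*((3*x+3)*(16*x^2+30*x+16)) := by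
        ring
      have id2 : (17/9) * 27 ^ (n+1) * ((x+1)*(x+1)*(x+2)) = (17/9)*27^n * (27*(x+1)*(x+1)*(x+2)) := by ring
      rw [id1, id2]
      have t1 := mul_le_mul_of_nonneg_right ih (by positivity : (0:ℝ) ≤ 27*(x+1)*(x+1)*(x+2))
      have t2 : 0 ≤ fcCoeff n*((3*x+3)*(16*x^2+30*x+16)) :=
        mul_nonneg hfc (mul_nonneg (by nlinarith) (by nlinarith))
      linarith

lemma summable_sq_geom {q : ℝ} (h0 : 0 ≤ q) (h1 : q < 1) :
    Summable (fun n : ℕ => ((n:ℝ)+1)^2 * q ^ (n-1)) := by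
  rw [← summable_nat_add_iff 1]
  have hq : ‖q‖ < 1 := by rwa [Real.norm_eq_abs, abs_of_nonneg h0]
  have h2 := summable_pow_mul_geometric_of_norm_lt_one (R := ℝ) 2 hq
  have h1' := summable_pow_mul_geometric_of_norm_lt_one (R := ℝ) 1 hq
  have h0' := summable_pow_mul_geometric_of_norm_lt_one (R := ℝ) 0 hq
  have : (fun n : ℕ => (((n+1 : ℕ):ℝ)+1)^2 * q ^ (n+1-1))
      = fun n : ℕ => (n:ℝ)^2 * q^n + 4*((n:ℝ)^1 * q^n) + 4*((n:ℝ)^0 * q^n) := by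
    funext n; simp only [Nat.add_sub_cancel]; push_cast; ring
  rw [this]
  exact ((h2.add (h1'.mul_left 4)).add (h0'.mul_left 4))

/-- general summability for coefficients bounded by `A*(n+1)*27^n`. -/
lemma summable_series {c : ℕ → ℝ} {A : ℝ} (hc : ∀ n, |c n| ≤ A * ((n:ℝ)+1) * 27 ^ n)
    {u : ℝ} (hu : |u| < 1/27) : Summable (fun n => c n * u ^ n) := by
  have hA : 0 ≤ A := by have := (abs_nonneg (c 0)).trans (hc 0); simpa using this
  have hq0 : (0:ℝ) ≤ 27 * |u| := by positivity
  have hq1 : 27 * |u| < 1 := by linarith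
  have hs : Summable (fun n : ℕ => A * ((n:ℝ)+1) * (27*|u|) ^ n) := by
    have hq : ‖27*|u|‖ < 1 := by rwa [Real.norm_eq_abs, abs_of_nonneg hq0]
    have h1' := summable_pow_mul_geometric_of_norm_lt_one (R := ℝ) 1 hq
    have h0' := summable_pow_mul_geometric_of_norm_lt_one (R := ℝ) 0 hq
    have : (fun n : ℕ => A * ((n:ℝ)+1) * (27*|u|) ^ n)
        = fun n : ℕ => A * ((n:ℝ)^1 * (27*|u|)^n) + A * ((n:ℝ)^0 * (27*|u|)^n) := by
      funext n; ring
    rw [this]; exact (h1'.mul_left A).add (h0'.mul_left A)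
  apply Summable.of_norm
  apply hs.of_nonneg_of_le (fun n => norm_nonneg _)
  intro n
  rw [norm_mul, norm_pow, Real.norm_eq_abs, Real.norm_eq_abs]
  calc |c n| * |u| ^ n ≤ (A * ((n:ℝ)+1) * 27 ^ n) * |u| ^ n := by
        apply mul_le_mul_of_nonneg_right (hc n) (by positivity)
    _ = A * ((n:ℝ)+1) * (27*|u|) ^ n := by rw [mul_pow]; ring

lemma hasDerivAt_series {c : ℕ → ℝ} {A : ℝ} (hc : ∀ n, |c n| ≤ A * ((n:ℝ)+1) * 27 ^ n)
    {x : ℝ} (hx : |x| < 1/27) :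
    HasDerivAt (fun u : ℝ => ∑' n, c n * u ^ n) (∑' n : ℕ, (n:ℝ) * c n * x ^ (n-1)) x := by
  have hA : 0 ≤ A := by have := (abs_nonneg (c 0)).trans (hc 0); simpa using this
  set r : ℝ := (|x| + 1/27) / 2 with hr
  have hxr : |x| < r := by rw [hr]; linarith
  have hr0 : 0 < r := lt_of_le_of_lt (abs_nonneg x) hxr
  have hrlt : r < 1/27 := by rw [hr]; linarith
  set q : ℝ := 27 * r with hq
  have hq0 : 0 ≤ q := by positivity
  have hq1 : q < 1 := by rw [hq]; linarith
  have hsum : Summable (fun n : ℕ => (27*A) * (((n:ℝ)+1)^2 * q ^ (n-1))) :=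
    (summable_sq_geom hq0 hq1).mul_left _
  have key := hasDerivAt_tsum_of_isPreconnected hsum (isOpen_Ioo (a := -r) (b := r))
    (isPreconnected_Ioo)
    (g := fun n u => c n * u ^ n) (g' := fun n u => (n:ℝ) * c n * u ^ (n-1))
    (fun n y _ => by
      simpa [mul_comm, mul_assoc, mul_left_comm] using (hasDerivAt_pow n y).const_mul (c n))
    (fun n y hy => ?_) (by constructor <;> [linarith; linarith] : (0:ℝ) ∈ Set.Ioo (-r) r)
    ?_ (abs_lt.1 hxr : x ∈ Set.Ioo (-r) r)
  · exact key
  · -- bound on derivatives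
    have hyr : |y| ≤ r := by
      rw [abs_le]; exact ⟨hy.1.le, hy.2.le⟩
    rw [Real.norm_eq_abs, abs_mul, abs_mul, abs_pow, Nat.abs_cast]
    have step1 : (n:ℝ) * |c n| * |y| ^ (n-1) ≤ (n:ℝ) * (A * ((n:ℝ)+1) * 27 ^ n) * r ^ (n-1) := by
      apply mul_le_mul
      · exact mul_le_mul_of_nonneg_left (hc n) (Nat.cast_nonneg n)
      · exact pow_le_pow_left₀ (abs_nonneg y) hyr _
      · positivity
      · positivity
    refine step1.trans ?_
    match n with
    | 0 => simp; positivity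
    | (m+1) =>
      set n := m + 1 with hn
      have hpow : (27:ℝ) ^ n * r ^ (n-1) = 27 * q ^ (n-1) := by
        rw [hq, mul_pow, hn]
        simp only [Nat.add_sub_cancel, pow_succ]
        ring
      calc (n:ℝ) * (A * ((n:ℝ)+1) * 27 ^ n) * r ^ (n-1)
          = A * ((n:ℝ) * ((n:ℝ)+1)) * (27 ^ n * r ^ (n-1)) := by ring
        _ ≤ A * (((n:ℝ)+1) * ((n:ℝ)+1)) * (27 ^ n * r ^ (n-1)) := by
            apply mul_le_mul_of_nonneg_right
            · apply mul_le_mul_of_nonneg_left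
              · apply mul_le_mul_of_nonneg_right (by linarith [Nat.cast_nonneg (α := ℝ) n]) (by positivity)
              · exact hA
            · positivity
        _ = 27*A * (((n:ℝ)+1)^2 * q ^ (n-1)) := by rw [hpow]; ring
  · -- summability at 0
    apply summable_of_ne_finset_zero (s := {0})
    intro n hn
    simp only [Finset.mem_singleton] at hn
    simp [zero_pow hn]

noncomputable def Hser (u : ℝ) : ℝ := ∑' n : ℕ, ((n:ℝ)+1) * fcCoeff n * u ^ n

lemma fc_abs_le (n : ℕ) : |fcCoeff n| ≤ 1 * ((n:ℝ)+1) * 27 ^ n := by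
  rw [abs_of_nonneg (fc_nonneg n), one_mul]
  calc fcCoeff n ≤ 27 ^ n := fc_le n
    _ ≤ ((n:ℝ)+1) * 27 ^ n := by
      nlinarith [Nat.cast_nonneg (α := ℝ) n, pow_pos (by norm_num : (0:ℝ) < 27) n]

lemma fcH_abs_le (n : ℕ) : |((n:ℝ)+1) * fcCoeff n| ≤ 1 * ((n:ℝ)+1) * 27 ^ n := by
  rw [abs_mul, abs_of_nonneg (fc_nonneg n), abs_of_nonneg (by positivity : (0:ℝ) ≤ (n:ℝ)+1), one_mul]
  exact mul_le_mul_of_nonneg_left (fc_le n) (by positivity)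

lemma summable_F {u : ℝ} (hu : |u| < 1/27) : Summable (fun n : ℕ => fcCoeff n * u ^ n) :=
  summable_series fc_abs_le hu

lemma summable_H {u : ℝ} (hu : |u| < 1/27) : Summable (fun n : ℕ => ((n:ℝ)+1) * fcCoeff n * u ^ n) :=
  summable_series fcH_abs_le hu

lemma hasDerivAt_F {x : ℝ} (hx : |x| < 1/27) :
    HasDerivAt Fser (∑' n : ℕ, (n:ℝ) * fcCoeff n * x ^ (n-1)) x :=
  hasDerivAt_series fc_abs_le hx

lemma deriv_F {x : ℝ} (hx : |x| < 1/27) :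
    deriv Fser x = ∑' n : ℕ, (n:ℝ) * fcCoeff n * x ^ (n-1) :=
  (hasDerivAt_F hx).deriv

lemma summable_dF {x : ℝ} (hx : |x| < 1/27) :
    Summable (fun n : ℕ => x * ((n:ℝ) * fcCoeff n * x ^ (n-1))) := by
  apply Summable.mul_left
  -- compare
  have hq0 : (0:ℝ) ≤ 27 * |x| := by positivity
  have hq1 : 27 * |x| < 1 := by linarith [abs_nonneg x]
  have hs := (summable_sq_geom hq0 hq1).mul_left 27
  apply Summable.of_norm
  apply hs.of_nonneg_of_le (fun n => norm_nonneg _)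
  intro n
  rw [Real.norm_eq_abs, abs_mul, abs_mul, abs_pow, Nat.abs_cast,
    abs_of_nonneg (fc_nonneg n)]
  match n with
  | 0 => simp
  | (m+1) =>
    set n := m + 1 with hn
    have h1 : fcCoeff n ≤ 27 ^ n := fc_le n
    have hpow : (27:ℝ) ^ n * |x| ^ (n-1) = 27 * (27*|x|) ^ (n-1) := by
      rw [mul_pow, hn]; simp only [Nat.add_sub_cancel, pow_succ]; ring
    calc (n:ℝ) * fcCoeff n * |x| ^ (n-1) ≤ (n:ℝ) * 27 ^ n * |x| ^ (n-1) := by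
          apply mul_le_mul_of_nonneg_right _ (by positivity)
          exact mul_le_mul_of_nonneg_left h1 (Nat.cast_nonneg n)
      _ = (n:ℝ) * (27 ^ n * |x| ^ (n-1)) := by ring
      _ ≤ ((n:ℝ)+1)^2 * (27 ^ n * |x| ^ (n-1)) := by
          apply mul_le_mul_of_nonneg_right _ (by positivity)
          nlinarith [Nat.cast_nonneg (α := ℝ) n]
      _ = 27 * (((n:ℝ)+1)^2 * (27*|x|) ^ (n-1)) := by rw [hpow]; ring

lemma G_eq_H {u : ℝ} (hu : |u| < 1/27) :
    Fser u + u * deriv Fser u = Hser u := by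
  rw [deriv_F hu, ← tsum_mul_left (a := u)]
  rw [Fser, Hser, ← Summable.tsum_add (summable_F hu) (summable_dF hu)]
  congr 1
  funext n
  match n with
  | 0 => simp [fc_zero]
  | (m+1) => push_cast; simp only [Nat.add_sub_cancel, pow_succ]; ring

lemma Hser_zero : Hser 0 = 0 := by
  rw [Hser]
  convert tsum_zero with n
  match n with
  | 0 => simp [fc_zero]
  | (m+1) => simp

lemma Fser_zero : Fser 0 = 0 := by
  rw [Fser]
  convert tsum_zero with n
  match n with
  | 0 => simp [fc_zero]
  | (m+1) => simp

lemma Hser_continuousAt {x : ℝ} (hx : |x| < 1/27) : ContinuousAt Hser x := by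
  have := hasDerivAt_series fcH_abs_le hx
  exact this.continuousAt

lemma Hser_strictMono : StrictMonoOn Hser (Set.Ico 0 (1/27 : ℝ)) := by
  intro u hu v hv huv
  obtain ⟨hu0, hu1⟩ := hu
  obtain ⟨hv0, hv1⟩ := hv
  rw [Hser, Hser]
  have habsu : |u| < 1/27 := by rw [abs_of_nonneg hu0]; exact hu1
  have habsv : |v| < 1/27 := by rw [abs_of_nonneg hv0]; exact hv1
  apply Summable.tsum_lt_tsum_of_nonneg (i := 1)
  · intro n
    have := fc_nonneg n
    positivity
  · intro n
    have := fc_nonneg n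
    apply mul_le_mul_of_nonneg_left (pow_le_pow_left₀ hu0 huv.le n) (by positivity)
  · have : fcCoeff 1 = 3 := fc_one
    simp only [Nat.cast_one, this, pow_one]
    nlinarith
  · exact summable_H habsv

lemma term_lower (n : ℕ) (hn : n ≠ 0) :
    (17/72) / ((n:ℝ)+1) ≤ ((n:ℝ)+1) * fcCoeff n * (1/27:ℝ)^n := by
  set x : ℝ := (n:ℝ) with hxdef
  have hx0 : 0 ≤ x := Nat.cast_nonneg n
  have h27 : (0:ℝ) < 27^n := by positivity
  have hlow := fc_lower n hn
  have key : (17/72) * 27^n ≤ (x+1)^2 * fcCoeff n := by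
    nlinarith [fc_nonneg n, mul_nonneg (fc_nonneg n) (by linarith : (0:ℝ) ≤ 8*x+7)]
  rw [div_le_iff₀ (by positivity : (0:ℝ) < x+1)]
  have e : (x+1)*fcCoeff n*(1/27:ℝ)^n*(x+1) = ((x+1)^2*fcCoeff n)/27^n := by
    rw [one_div, inv_pow]; field_simp
  rw [e, le_div_iff₀ h27]; linarith

lemma partial_tendsto :
    Filter.Tendsto (fun N => ∑ n ∈ Finset.range N, ((n:ℝ)+1) * fcCoeff n * (1/27:ℝ)^n)
      Filter.atTop Filter.atTop := by
  have hh := Real.tendsto_sum_range_one_div_nat_succ_atTop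
  have hbase : Filter.Tendsto (fun N => (17/72 : ℝ) * (∑ i ∈ Finset.range N, (1 / ((i:ℝ) + 1))) - 17/72)
      Filter.atTop Filter.atTop := by
    apply Filter.tendsto_atTop_add_const_right
    exact Filter.Tendsto.const_mul_atTop (by norm_num) hh
  apply Filter.tendsto_atTop_mono _ hbase
  intro N
  have : ∑ n ∈ Finset.range N, (17/72 : ℝ) * (1 / ((n:ℝ)+1))
      = (17/72 : ℝ) * ∑ i ∈ Finset.range N, (1 / ((i:ℝ) + 1)) := by
    rw [Finset.mul_sum]
  rw [← this]
  have hterm : ∀ n ∈ Finset.range N, (17/72 : ℝ) * (1 / ((n:ℝ)+1)) - (if n = 0 then (17/72:ℝ) else 0)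
      ≤ ((n:ℝ)+1) * fcCoeff n * (1/27:ℝ)^n := by
    intro n _
    rcases Nat.eq_zero_or_pos n with h | h
    · subst h; simp [fc_zero]
    · rw [if_neg h.ne']
      have := term_lower n h.ne'
      rw [div_eq_mul_one_div] at this
      linarith
  have hsum := Finset.sum_le_sum hterm
  rw [Finset.sum_sub_distrib] at hsum
  have hif : ∑ n ∈ Finset.range N, (if n = 0 then (17/72:ℝ) else 0) ≤ 17/72 := by
    rcases Nat.eq_zero_or_pos N with h | h
    · subst h; simp; norm_num
    · rw [Finset.sum_ite_eq' (Finset.range N) 0 (fun _ => (17/72:ℝ))]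
      rw [if_pos (Finset.mem_range.2 h)]
  linarith

lemma Hser_tendsto :
    Filter.Tendsto Hser (nhdsWithin (1/27 : ℝ) (Set.Iio (1/27 : ℝ))) Filter.atTop := by
  rw [Filter.tendsto_atTop]
  intro M
  -- choose N with partial sum at 1/27 exceeding M + 1
  obtain ⟨N, hN⟩ := (partial_tendsto.eventually_ge_atTop (M+1)).exists
  set P : ℝ → ℝ := fun u => ∑ n ∈ Finset.range N, ((n:ℝ)+1) * fcCoeff n * u^n with hP
  have hPcont : ContinuousAt P (1/27 : ℝ) := by
    apply Continuous.continuousAt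
    refine continuous_finset_sum _ (fun n _ => ?_)
    exact continuous_const.mul (continuous_pow n)
  have hPval : M < P (1/27 : ℝ) := by
    rw [hP]; simp only []; linarith
  have hev1 : ∀ᶠ u in nhdsWithin (1/27 : ℝ) (Set.Iio (1/27 : ℝ)), M < P u := by
    apply Filter.Eventually.filter_mono nhdsWithin_le_nhds
    exact hPcont.eventually (lt_mem_nhds hPval)
  have hev2 : ∀ᶠ u in nhdsWithin (1/27 : ℝ) (Set.Iio (1/27 : ℝ)), u ∈ Set.Ioo (0:ℝ) (1/27) := by
    have h1 : ∀ᶠ u in nhdsWithin (1/27 : ℝ) (Set.Iio (1/27 : ℝ)), (0:ℝ) < u := by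
      apply Filter.Eventually.filter_mono nhdsWithin_le_nhds
      exact eventually_gt_nhds (by norm_num)
    have h2 : ∀ᶠ u in nhdsWithin (1/27 : ℝ) (Set.Iio (1/27 : ℝ)), u < 1/27 :=
      eventually_mem_nhdsWithin.mono (fun u hu => hu)
    filter_upwards [h1, h2] with u hu1 hu2 using ⟨hu1, hu2⟩
  filter_upwards [hev1, hev2] with u hPu hu
  have habs : |u| < 1/27 := by rw [abs_of_nonneg hu.1.le]; exact hu.2
  have hle : P u ≤ Hser u := by
    rw [Hser]
    apply Summable.sum_le_tsum (Finset.range N) _ (summable_H habs)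
    intro n _
    have := fc_nonneg n
    have := hu.1.le
    positivity
  linarith

/-- The function `u ↦ F(u) + u·F'(u)` is strictly increasing on `[0, 1/27)`,
equals `0` at `u = 0`, tends to `+∞` as `u → (1/27)⁻`, and consequently for every
`y > 0` there is a unique `u* ∈ (0, 1/27)` with `y = F(u*) + u*·F'(u*)`. -/
theorem stmt_5 :
    StrictMonoOn (fun u : ℝ => Fser u + u * deriv Fser u) (Set.Ico 0 (1 / 27)) ∧
    Fser 0 + (0 : ℝ) * deriv Fser 0 = 0 ∧
    Filter.Tendsto (fun u : ℝ => Fser u + u * deriv Fser u)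
      (nhdsWithin (1 / 27) (Set.Iio (1 / 27))) Filter.atTop ∧
    ∀ y : ℝ, 0 < y →
      ∃! u : ℝ, u ∈ Set.Ioo (0 : ℝ) (1 / 27) ∧ y = Fser u + u * deriv Fser u := by
  have habs : ∀ u : ℝ, u ∈ Set.Ico (0:ℝ) (1/27) → |u| < 1/27 := by
    intro u hu; rw [abs_of_nonneg hu.1]; exact hu.2
  have hGH : ∀ u : ℝ, u ∈ Set.Ico (0:ℝ) (1/27) → Fser u + u * deriv Fser u = Hser u :=
    fun u hu => G_eq_H (habs u hu)
  have hmono : StrictMonoOn (fun u : ℝ => Fser u + u * deriv Fser u) (Set.Ico 0 (1 / 27)) := by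
    intro u hu v hv huv
    simp only []
    rw [hGH u hu, hGH v hv]
    exact Hser_strictMono hu hv huv
  refine ⟨hmono, by rw [Fser_zero]; ring, ?_, ?_⟩
  · -- tendsto
    apply Hser_tendsto.congr'
    have hev : ∀ᶠ u in nhdsWithin (1/27 : ℝ) (Set.Iio (1/27 : ℝ)), u ∈ Set.Ioo (0:ℝ) (1/27) := by
      have h1 : ∀ᶠ u in nhdsWithin (1/27 : ℝ) (Set.Iio (1/27 : ℝ)), (0:ℝ) < u :=
        Filter.Eventually.filter_mono nhdsWithin_le_nhds (eventually_gt_nhds (by norm_num))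
      have h2 : ∀ᶠ u in nhdsWithin (1/27 : ℝ) (Set.Iio (1/27 : ℝ)), u < 1/27 :=
        eventually_mem_nhdsWithin.mono (fun u hu => hu)
      filter_upwards [h1, h2] with u hu1 hu2 using ⟨hu1, hu2⟩
    filter_upwards [hev] with u hu
    exact (hGH u ⟨hu.1.le, hu.2⟩).symm
  · intro y hy
    -- find u₁ with Hser u₁ ≥ y
    have hfreq := (Hser_tendsto.eventually_ge_atTop y).and
      (by
        have h1 : ∀ᶠ u in nhdsWithin (1/27 : ℝ) (Set.Iio (1/27 : ℝ)), (0:ℝ) < u :=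
          Filter.Eventually.filter_mono nhdsWithin_le_nhds (eventually_gt_nhds (by norm_num))
        have h2 : ∀ᶠ u in nhdsWithin (1/27 : ℝ) (Set.Iio (1/27 : ℝ)), u < 1/27 :=
          eventually_mem_nhdsWithin.mono (fun u hu => hu)
        filter_upwards [h1, h2] with u hu1 hu2 using (⟨hu1, hu2⟩ : u ∈ Set.Ioo (0:ℝ) (1/27)))
    obtain ⟨u₁, hyu₁, hu₁⟩ := hfreq.exists
    -- IVT on [0, u₁]
    have hsub : Set.Icc (0:ℝ) u₁ ⊆ Set.Ico (0:ℝ) (1/27) :=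
      fun x hx => ⟨hx.1, lt_of_le_of_lt hx.2 hu₁.2⟩
    have hcont : ContinuousOn Hser (Set.Icc (0:ℝ) u₁) := by
      intro x hx
      exact (Hser_continuousAt (habs x (hsub hx))).continuousWithinAt
    have hivt := intermediate_value_Icc hu₁.1.le hcont
    have hmem : y ∈ Set.Icc (Hser 0) (Hser u₁) := by
      rw [Hser_zero]; exact ⟨hy.le, hyu₁⟩
    obtain ⟨u, hu, hHu⟩ := hivt hmem
    have hu0 : u ≠ 0 := by
      intro h; rw [h, Hser_zero] at hHu; exact hy.ne hHu
    have huIoo : u ∈ Set.Ioo (0:ℝ) (1/27) :=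
      ⟨hu.1.lt_of_ne (Ne.symm hu0), lt_of_le_of_lt hu.2 hu₁.2⟩
    refine ⟨u, ⟨huIoo, ?_⟩, ?_⟩
    · rw [hGH u ⟨huIoo.1.le, huIoo.2⟩]; exact hHu.symm
    · rintro v ⟨hvIoo, hvy⟩
      have h1 : v ∈ Set.Ico (0:ℝ) (1/27) := ⟨hvIoo.1.le, hvIoo.2⟩
      have h2 : u ∈ Set.Ico (0:ℝ) (1/27) := ⟨huIoo.1.le, huIoo.2⟩
      apply hmono.injOn h1 h2
      simp only []
      rw [hGH v h1, hGH u h2, hHu, hvy, hGH v h1]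
end

section
/- The fixed-point equation R = 1 + ∑_{n≥1} (3n)!/(n!·n!·(n+1)!) · g^n · y^{n-1} · R^{n+1} has a unique solution R in the ring ℚ[y][[g]] of formal power series in g with polynomial coefficients in y, and all coefficients of R are polynomials in y with nonnegative integer coefficients. -/
open Nat PowerSeries

/-- The Fuss–Catalan-type rational numbers `(3n)!/(n!·n!·(n+1)!)`. -/
noncomputable def fcQ (n : ℕ) : ℚ := ((3 * n)! : ℚ) / ((n ! : ℚ) * (n !) * ((n + 1)!))

/-- `R ∈ ℚ[y][[g]]` satisfies `R = 1 + ∑_{n≥1} a_n · g^n · R^{n+1}`, coefficient-wise. -/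
def SatisfiesFP (a : ℕ → Polynomial ℚ) (R : PowerSeries (Polynomial ℚ)) : Prop :=
  ∀ N : ℕ, coeff (R := Polynomial ℚ) N R =
    coeff (R := Polynomial ℚ) N
      (1 + ∑ n ∈ Finset.Icc 1 N, PowerSeries.C (R := Polynomial ℚ) (a n) * X ^ n * R ^ (n + 1))

namespace Stmt7Aux

abbrev P := Polynomial ℚ

lemma fcQ_eq (n : ℕ) : fcQ n = (((3*n).choose n * catalan n : ℕ) : ℚ) := by
  have hN : (3*n).choose n * catalan n * (n ! * n ! * (n+1)!) = (3*n)! := by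
    have h1 := succ_mul_catalan_eq_centralBinom n
    have h2 : (2*n).choose n * n ! * n ! = (2*n)! := by
      have := Nat.choose_mul_factorial_mul_factorial (show n ≤ 2*n by omega)
      simpa [show 2*n - n = n by omega] using this
    have h3 : (3*n).choose n * n ! * (2*n)! = (3*n)! := by
      have := Nat.choose_mul_factorial_mul_factorial (show n ≤ 3*n by omega)
      simpa [show 3*n - n = 2*n by omega] using this
    have hc : n.centralBinom = (2*n).choose n := rfl
    calc (3*n).choose n * catalan n * (n ! * n ! * (n+1)!)
        = (3*n).choose n * (((n+1) * catalan n) * n ! * n !) * n ! := by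
          rw [Nat.factorial_succ]; ring
      _ = (3*n).choose n * ((2*n).choose n * n ! * n !) * n ! := by rw [h1, hc]
      _ = (3*n).choose n * n ! * (2*n)! := by rw [h2]; ring
      _ = (3*n)! := h3
  rw [fcQ, div_eq_iff (by positivity)]
  exact_mod_cast hN.symm

lemma coeff_mul_congr {A B A' B' : PowerSeries P} {m : ℕ}
    (hA : ∀ k ≤ m, coeff (R := P) k A = coeff (R := P) k A') (hB : ∀ k ≤ m, coeff (R := P) k B = coeff (R := P) k B') :
    coeff (R := P) m (A * B) = coeff (R := P) m (A' * B') := by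
  rw [coeff_mul, coeff_mul]
  refine Finset.sum_congr rfl fun p hp => ?_
  rw [Finset.HasAntidiagonal.mem_antidiagonal] at hp
  rw [hA p.1 (by omega), hB p.2 (by omega)]

lemma coeff_pow_congr {A A' : PowerSeries P} {m : ℕ}
    (hA : ∀ k ≤ m, coeff (R := P) k A = coeff (R := P) k A') (j : ℕ) :
    ∀ k ≤ m, coeff (R := P) k (A ^ j) = coeff (R := P) k (A' ^ j) := by
  induction j with
  | zero => simp
  | succ j ih =>
    intro k hk
    rw [pow_succ, pow_succ]
    exact coeff_mul_congr (fun l hl => ih l (le_trans hl hk))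
      (fun l hl => hA l (le_trans hl hk))

/-- coeff N of a term in the RHS. -/
lemma coeff_term (a : P) (n : ℕ) (N : ℕ) (hnN : n ≤ N) (R : PowerSeries P) :
    coeff (R := P) N (PowerSeries.C (R := P) a * X ^ n * R ^ (n+1)) = a * coeff (R := P) (N - n) (R ^ (n+1)) := by
  rw [mul_assoc, coeff_C_mul, coeff_X_pow_mul', if_pos hnN]

lemma coeff_rhs_congr (a : ℕ → P) {R S : PowerSeries P} {N : ℕ}
    (h : ∀ k < N, coeff (R := P) k R = coeff (R := P) k S) :
    coeff (R := P) N (1 + ∑ n ∈ Finset.Icc 1 N, PowerSeries.C (R := P) (a n) * X ^ n * R ^ (n + 1)) =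
    coeff (R := P) N (1 + ∑ n ∈ Finset.Icc 1 N, PowerSeries.C (R := P) (a n) * X ^ n * S ^ (n + 1)) := by
  rw [map_add, map_add, map_sum, map_sum]
  congr 1
  refine Finset.sum_congr rfl fun n hn => ?_
  rw [Finset.mem_Icc] at hn
  rw [coeff_term _ n N hn.2, coeff_term _ n N hn.2]
  congr 1
  exact coeff_pow_congr (fun k hk => h k (by omega)) (n+1) (N - n) le_rfl

noncomputable def sol (a : ℕ → P) : ℕ → P
  | N => coeff (R := P) N (1 + ∑ n ∈ Finset.Icc 1 N,
      PowerSeries.C (R := P) (a n) * X ^ n *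
        (PowerSeries.mk fun k => if _ : k < N then sol a k else 0) ^ (n + 1))
  termination_by N => N

lemma sol_spec (a : ℕ → P) : SatisfiesFP a (PowerSeries.mk (sol a)) := by
  intro N
  rw [coeff_mk, sol]
  exact coeff_rhs_congr a fun k hk => by simp [coeff_mk, hk]

lemma unique_fp (a : ℕ → P) {R S : PowerSeries P} (hR : SatisfiesFP a R)
    (hS : SatisfiesFP a S) : R = S := by
  have key : ∀ N, coeff (R := P) N R = coeff (R := P) N S := by
    intro N
    induction N using Nat.strong_induction_on with
    | _ N ih =>
      rw [hR N, hS N]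
      exact coeff_rhs_congr a ih
  exact PowerSeries.ext key

/-- `p` has nonnegative-integer coefficients. -/
def NN (p : P) : Prop := ∃ q : Polynomial ℕ, Polynomial.map (Nat.castRingHom ℚ) q = p

lemma NN_zero : NN 0 := ⟨0, by simp⟩

lemma NN_one : NN 1 := ⟨1, by simp⟩

lemma NN_add {p q : P} (hp : NN p) (hq : NN q) : NN (p + q) := by
  obtain ⟨p', rfl⟩ := hp; obtain ⟨q', rfl⟩ := hq
  exact ⟨p' + q', by simp [Polynomial.map_add]⟩

lemma NN_mul {p q : P} (hp : NN p) (hq : NN q) : NN (p * q) := by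
  obtain ⟨p', rfl⟩ := hp; obtain ⟨q', rfl⟩ := hq
  exact ⟨p' * q', by simp [Polynomial.map_mul]⟩

lemma NN_sum {ι : Type*} (s : Finset ι) (f : ι → P) (h : ∀ i ∈ s, NN (f i)) :
    NN (∑ i ∈ s, f i) :=
  Finset.sum_induction f NN (fun _ _ ha hb => NN_add ha hb) NN_zero h

lemma NN_coeff_mul {A B : PowerSeries P} {m : ℕ}
    (hA : ∀ k ≤ m, NN (coeff (R := P) k A)) (hB : ∀ k ≤ m, NN (coeff (R := P) k B)) :
    NN (coeff (R := P) m (A * B)) := by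
  rw [coeff_mul]
  refine NN_sum _ _ fun p hp => ?_
  rw [Finset.HasAntidiagonal.mem_antidiagonal] at hp
  exact NN_mul (hA p.1 (by omega)) (hB p.2 (by omega))

lemma NN_coeff_pow {A : PowerSeries P} {m : ℕ}
    (hA : ∀ k ≤ m, NN (coeff (R := P) k A)) (j : ℕ) :
    ∀ k ≤ m, NN (coeff (R := P) k (A ^ j)) := by
  induction j with
  | zero =>
    intro k _
    rw [pow_zero, coeff_one]
    split <;> [exact NN_one; exact NN_zero]
  | succ j ih =>
    intro k hk
    rw [pow_succ]
    exact NN_coeff_mul (fun l hl => ih l (le_trans hl hk))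
      (fun l hl => hA l (le_trans hl hk))

lemma NN_a (n : ℕ) : NN (Polynomial.C (fcQ n) * Polynomial.X ^ (n - 1)) := by
  refine ⟨Polynomial.C ((3*n).choose n * catalan n) * Polynomial.X ^ (n - 1), ?_⟩
  rw [Polynomial.map_mul, Polynomial.map_pow, Polynomial.map_C, Polynomial.map_X, fcQ_eq]
  push_cast
  ring

lemma NN_sol {R : PowerSeries P}
    (hR : SatisfiesFP (fun n => Polynomial.C (fcQ n) * Polynomial.X ^ (n - 1)) R) :
    ∀ N, NN (coeff (R := P) N R) := by
  intro N
  induction N using Nat.strong_induction_on with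
  | _ N ih =>
    rw [hR N, map_add, map_sum]
    refine NN_add ?_ (NN_sum _ _ fun n hn => ?_)
    · rw [coeff_one]
      split <;> [exact NN_one; exact NN_zero]
    · rw [Finset.mem_Icc] at hn
      rw [coeff_term _ n N hn.2]
      refine NN_mul (NN_a n) ?_
      exact NN_coeff_pow (fun k hk => ih k (by omega)) (n+1) (N - n) le_rfl

end Stmt7Aux

/-- The fixed-point equation `R = 1 + ∑_{n≥1} (3n)!/(n!n!(n+1)!) g^n y^{n-1} R^{n+1}`
has a unique solution `R ∈ ℚ[y][[g]]`, and every coefficient of every coefficient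
polynomial of `R` is a nonnegative integer. -/
theorem stmt_7 :
    (∃! R : PowerSeries (Polynomial ℚ),
      SatisfiesFP (fun n => Polynomial.C (fcQ n) * Polynomial.X ^ (n - 1)) R) ∧
    ∀ R : PowerSeries (Polynomial ℚ),
      SatisfiesFP (fun n => Polynomial.C (fcQ n) * Polynomial.X ^ (n - 1)) R →
      ∀ N i : ℕ, ∃ m : ℕ, (coeff (R := Polynomial ℚ) N R).coeff i = (m : ℚ) := by
  constructor
  · exact ⟨PowerSeries.mk (Stmt7Aux.sol _), Stmt7Aux.sol_spec _,
      fun S hS => Stmt7Aux.unique_fp _ hS (Stmt7Aux.sol_spec _)⟩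
  · intro R hR N i
    obtain ⟨q, hq⟩ := Stmt7Aux.NN_sol hR N
    exact ⟨q.coeff i, by rw [← hq, Polynomial.coeff_map]; simp⟩
end
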